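/- Let d ≥ K ≥ 2, n ≥ 1, λ_W > 0, λ_H > 0, c := K√(nλ_H λ_W) ≤ 1, and ρ := ((1−c)(K−1)/K)·√(λ_W/(nλ_H)). If (W*, H*, b*) is a global minimizer of g(W,H,b) := (1/(2Kn))‖WH + b·1_Nᵀ − Y‖_F² + (λ_W/2)‖W‖_F² + (λ_H/2)‖H‖_F² over W ∈ ℝ^{K×d}, H ∈ ℝ^{d×Kn}, b ∈ ℝ^K, then W*W*ᵀ = (nλ_H/λ_W)·ρ·(K/(K−1))·(I_K − (1/K)·1_K·1_Kᵀ) and W*H* = √(nλ_H/λ_W)·ρ·(K/(K−1))·((I_K − (1/K)·1_K·1_Kᵀ) ⊗ 1_nᵀ). -/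

import Mathlib

open Matrix Finset

noncomputable section

/-- Squared Frobenius norm of a real matrix. -/
def frobSq {m n : Type*} [Fintype m] [Fintype n] (A : Matrix m n ℝ) : ℝ :=
  ∑ i, ∑ j, (A i j) ^ 2

namespace UFMaux

def ipM {m n : Type*} [Fintype m] [Fintype n] (A B : Matrix m n ℝ) : ℝ :=
  ∑ i, ∑ j, A i j * B i j

variable {m n p q : Type*} [Fintype m] [Fintype n] [Fintype p] [Fintype q]

lemma frobSq_nonneg (A : Matrix m n ℝ) : 0 ≤ frobSq A := by
  apply Finset.sum_nonneg; intro i _; apply Finset.sum_nonneg; intro j _; positivity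

lemma frobSq_eq_zero {A : Matrix m n ℝ} (h : frobSq A = 0) : A = 0 := by
  ext i j
  have h1 : ∀ i ∈ Finset.univ (α := m), ∑ j, (A i j)^2 = 0 := by
    rw [frobSq, Finset.sum_eq_zero_iff_of_nonneg] at h
    · exact h
    · intro i _; apply Finset.sum_nonneg; intro j _; positivity
  have h2 := h1 i (Finset.mem_univ i)
  rw [Finset.sum_eq_zero_iff_of_nonneg (by intro j _; positivity)] at h2
  have := h2 j (Finset.mem_univ j)
  simpa [pow_eq_zero_iff] using this

lemma ipM_self (A : Matrix m n ℝ) : ipM A A = frobSq A := by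
  simp [ipM, frobSq, sq]

lemma ipM_comm (A B : Matrix m n ℝ) : ipM A B = ipM B A := by
  simp [ipM, mul_comm]

lemma frobSq_sub (A B : Matrix m n ℝ) :
    frobSq (A - B) = frobSq A - 2 * ipM A B + frobSq B := by
  simp only [frobSq, ipM, Matrix.sub_apply, sub_sq, Finset.sum_add_distrib,
    Finset.sum_sub_distrib, Finset.mul_sum]
  ring

lemma frobSq_add (A B : Matrix m n ℝ) :
    frobSq (A + B) = frobSq A + 2 * ipM A B + frobSq B := by
  simp only [frobSq, ipM, Matrix.add_apply, add_sq, Finset.sum_add_distrib, Finset.mul_sum]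
  ring

lemma frobSq_smul (r : ℝ) (A : Matrix m n ℝ) : frobSq (r • A) = r^2 * frobSq A := by
  simp [frobSq, Matrix.smul_apply, mul_pow, Finset.mul_sum, smul_eq_mul]

lemma frobSq_transpose (A : Matrix m n ℝ) : frobSq Aᵀ = frobSq A := by
  rw [frobSq, Finset.sum_comm]; rfl

lemma ipM_smul_left (r : ℝ) (A B : Matrix m n ℝ) : ipM (r • A) B = r * ipM A B := by
  simp [ipM, Matrix.smul_apply, Finset.mul_sum, smul_eq_mul, mul_assoc]

lemma ipM_smul_right (r : ℝ) (A B : Matrix m n ℝ) : ipM A (r • B) = r * ipM A B := by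
  simp only [ipM, Matrix.smul_apply, smul_eq_mul, Finset.mul_sum]
  congr 1; ext i; congr 1; ext j; ring

lemma ipM_add_left (A B C : Matrix m n ℝ) : ipM (A + B) C = ipM A C + ipM B C := by
  simp [ipM, Matrix.add_apply, add_mul, Finset.sum_add_distrib]

lemma ipM_sub_left (A B C : Matrix m n ℝ) : ipM (A - B) C = ipM A C - ipM B C := by
  simp [ipM, Matrix.sub_apply, sub_mul, Finset.sum_sub_distrib]

/-- `⟪X, Y Bᵀ⟫ = ⟪Y, X B⟫`. -/
lemma ipM_mul_transpose (X : Matrix m n ℝ) (Y : Matrix m p ℝ) (B : Matrix n p ℝ) :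
    ipM X (Y * Bᵀ) = ipM Y (X * B) := by
  simp only [ipM, Matrix.mul_apply, Matrix.transpose_apply, Finset.mul_sum]
  refine Finset.sum_congr rfl fun i _ => ?_
  rw [Finset.sum_comm]
  exact Finset.sum_congr rfl fun a _ => Finset.sum_congr rfl fun b _ => by ring

lemma ipM_transpose (A C : Matrix m n ℝ) : ipM Aᵀ Cᵀ = ipM A C := by
  simp only [ipM, Matrix.transpose_apply]
  exact Finset.sum_comm

/-- `⟪B, W H⟫ = ⟪Wᵀ, H Bᵀ⟫`. -/
lemma ipM_B_WH (B : Matrix m p ℝ) (W : Matrix m q ℝ) (H : Matrix q p ℝ) :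
    ipM B (W * H) = ipM Wᵀ (H * Bᵀ) := by
  calc ipM B (W * H) = ipM Bᵀ (Hᵀ * Wᵀ) := by rw [← Matrix.transpose_mul, ipM_transpose]
    _ = ipM Hᵀ (Bᵀ * W) := ipM_mul_transpose Bᵀ Hᵀ W
    _ = ipM H (Wᵀ * B) := by
        have h : (Wᵀ * B)ᵀ = Bᵀ * W := by
          rw [Matrix.transpose_mul, Matrix.transpose_transpose]
        rw [← h, ipM_transpose]
    _ = ipM Wᵀ (H * Bᵀ) := (ipM_mul_transpose Wᵀ H B).symm

/-- Centered one-hot column entry. -/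
def bc (K : ℕ) (k k' : Fin K) : ℝ := (if k' = k then 1 else 0) - 1 / K

/-- Centered label matrix. -/
def Bm (K n : ℕ) : Matrix (Fin K) (Fin K × Fin n) ℝ := Matrix.of fun k p => bc K k p.1

variable {K n : ℕ}

lemma bc_col_sum (hK : (K:ℝ) ≠ 0) (k' : Fin K) : ∑ k : Fin K, bc K k k' = 0 := by
  simp [bc, Finset.sum_sub_distrib, Finset.sum_ite_eq, hK]

lemma bc_row_sum (hK : (K:ℝ) ≠ 0) (k : Fin K) : ∑ k' : Fin K, bc K k k' = 0 := by
  simp [bc, Finset.sum_sub_distrib, Finset.sum_ite_eq', hK]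

lemma sum_bc_mul (hK : (K:ℝ) ≠ 0) (k k' : Fin K) :
    ∑ k'' : Fin K, bc K k k'' * bc K k' k'' = (if k = k' then 1 else 0) - 1/K := by
  have h : ∀ k'' : Fin K, bc K k k'' * bc K k' k''
      = (if k'' = k then (1:ℝ) else 0) * (if k'' = k' then 1 else 0)
        - (if k'' = k then (1:ℝ) else 0) * (1/K) - (if k'' = k' then (1:ℝ) else 0) * (1/K)
        + 1/K^2 := by
    intro k''; simp only [bc]; ring
  rw [Finset.sum_congr rfl fun k'' _ => h k'']
  simp only [Finset.sum_add_distrib, Finset.sum_sub_distrib, ite_mul, one_mul, zero_mul,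
    Finset.sum_ite_eq', Finset.mem_univ, if_true, Finset.sum_const, Finset.card_univ,
    Fintype.card_fin, nsmul_eq_mul]
  have hKK : (K:ℝ) * (1/K^2) = 1/K := by field_simp
  rw [hKK]
  by_cases hkk : k = k' <;> simp [hkk, eq_comm]

lemma Bm_row_sum (hK : (K:ℝ) ≠ 0) (k : Fin K) : ∑ p : Fin K × Fin n, Bm K n k p = 0 := by
  rw [Fintype.sum_prod_type]
  have h1 : ∀ k' : Fin K, ∑ _i : Fin n, Bm K n k (k', _i) = (n:ℝ) * bc K k k' := by
    intro k'
    simp only [Bm, Matrix.of_apply]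
    rw [Finset.sum_const, Finset.card_univ, Fintype.card_fin, nsmul_eq_mul]
  rw [Finset.sum_congr rfl fun k' _ => h1 k', ← Finset.mul_sum, bc_row_sum hK, mul_zero]

lemma Bm_col_sum (hK : (K:ℝ) ≠ 0) (p : Fin K × Fin n) : ∑ k : Fin K, Bm K n k p = 0 := by
  simpa [Bm] using bc_col_sum hK p.1

lemma BmBmT (hK : (K:ℝ) ≠ 0) : Bm K n * (Bm K n)ᵀ =
    (n:ℝ) • ((1 : Matrix (Fin K) (Fin K) ℝ) - (1/(K:ℝ)) • Matrix.of (fun _ _ : Fin K => (1:ℝ))) := by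
  ext k k'
  rw [Matrix.mul_apply]
  simp only [Matrix.transpose_apply, Matrix.smul_apply, Matrix.sub_apply, Matrix.one_apply,
    Matrix.of_apply, smul_eq_mul, mul_one]
  have h1 : ∀ k'' : Fin K, ∑ _i : Fin n, Bm K n k (k'', _i) * Bm K n k' (k'', _i)
      = (n:ℝ) * (bc K k k'' * bc K k' k'') := by
    intro k''
    simp only [Bm, Matrix.of_apply]
    rw [Finset.sum_const, Finset.card_univ, Fintype.card_fin, nsmul_eq_mul]
  rw [Fintype.sum_prod_type, Finset.sum_congr rfl fun k'' _ => h1 k'', ← Finset.mul_sum,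
    sum_bc_mul hK]

/-- `P * B = B` where `P = I - (1/K)J`. -/
lemma PBm (hK : (K:ℝ) ≠ 0) :
    ((1 : Matrix (Fin K) (Fin K) ℝ) - (1/(K:ℝ)) • Matrix.of (fun _ _ : Fin K => (1:ℝ))) * Bm K n
      = Bm K n := by
  ext k p
  rw [Matrix.mul_apply]
  simp only [Matrix.sub_apply, Matrix.smul_apply, Matrix.one_apply, Matrix.of_apply,
    smul_eq_mul, mul_one, sub_mul, ite_mul, one_mul, zero_mul]
  rw [Finset.sum_sub_distrib]
  simp only [Finset.sum_ite_eq, Finset.mem_univ, if_true]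
  rw [← Finset.mul_sum, Bm_col_sum hK, mul_zero, sub_zero]

lemma BtB_sq (hK : (K:ℝ) ≠ 0) :
    ((Bm K n)ᵀ * Bm K n) * ((Bm K n)ᵀ * Bm K n) = (n:ℝ) • ((Bm K n)ᵀ * Bm K n) := by
  calc ((Bm K n)ᵀ * Bm K n) * ((Bm K n)ᵀ * Bm K n)
      = (Bm K n)ᵀ * (Bm K n * (Bm K n)ᵀ) * Bm K n := by
        rw [Matrix.mul_assoc, Matrix.mul_assoc, Matrix.mul_assoc]
    _ = (Bm K n)ᵀ * ((n:ℝ) • (((1 : Matrix (Fin K) (Fin K) ℝ)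
          - (1/(K:ℝ)) • Matrix.of (fun _ _ : Fin K => (1:ℝ))) * Bm K n)) := by
        rw [BmBmT hK, Matrix.mul_assoc, Matrix.smul_mul]
    _ = (n:ℝ) • ((Bm K n)ᵀ * Bm K n) := by rw [PBm hK, Matrix.mul_smul]

lemma frobSq_Bm (hK : (K:ℝ) ≠ 0) : frobSq (Bm K n) = (n:ℝ) * ((K:ℝ) - 1) := by
  have h : ∀ k : Fin K, ∑ p, (Bm K n k p)^2 = (Bm K n * (Bm K n)ᵀ) k k := by
    intro k
    rw [Matrix.mul_apply]
    exact Finset.sum_congr rfl fun p _ => by rw [sq, Matrix.transpose_apply]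
  rw [frobSq, Finset.sum_congr rfl fun k _ => h k]
  rw [BmBmT hK]
  simp only [Matrix.smul_apply, Matrix.sub_apply, Matrix.one_apply_eq, Matrix.of_apply,
    smul_eq_mul, mul_one, Finset.sum_const, Finset.card_univ, Fintype.card_fin, nsmul_eq_mul]
  field_simp

lemma ipM_const_Bm (hK : (K:ℝ) ≠ 0) (f : Fin K → ℝ) :
    ipM (Matrix.of fun k (_ : Fin K × Fin n) => f k) (Bm K n) = 0 := by
  rw [ipM]
  have h : ∀ k : Fin K, ∑ p : Fin K × Fin n,
      (Matrix.of fun k (_ : Fin K × Fin n) => f k) k p * Bm K n k p = 0 := by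
    intro k
    simp only [Matrix.of_apply]
    rw [← Finset.mul_sum, Bm_row_sum hK, mul_zero]
  rw [Finset.sum_congr rfl fun k _ => h k, Finset.sum_const_zero]

lemma ipM_Y_Bm (hK : (K:ℝ) ≠ 0) (Y : Matrix (Fin K) (Fin K × Fin n) ℝ)
    (hY : ∀ k p, Y k p = if p.1 = k then 1 else 0) :
    ipM Y (Bm K n) = (n:ℝ) * ((K:ℝ) - 1) := by
  have hYe : Y = Bm K n + Matrix.of (fun _ (_ : Fin K × Fin n) => (1:ℝ)/K) := by
    ext k p
    simp [hY, Bm, bc]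
  rw [hYe, ipM_add_left, ipM_self, frobSq_Bm hK, ipM_const_Bm hK, add_zero]

lemma Y_row_sum (hK : (K:ℝ) ≠ 0) (Y : Matrix (Fin K) (Fin K × Fin n) ℝ)
    (hY : ∀ k p, Y k p = if p.1 = k then 1 else 0) (k : Fin K) :
    ∑ p : Fin K × Fin n, Y k p = (n:ℝ) := by
  have hYe : ∀ p, Y k p = Bm K n k p + 1/K := by
    intro p; simp [hY, Bm, bc]
  rw [Finset.sum_congr rfl fun p _ => hYe p, Finset.sum_add_distrib, Bm_row_sum hK]
  simp only [Finset.sum_const, Finset.card_univ, Fintype.card_prod, Fintype.card_fin,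
    nsmul_eq_mul, zero_add]
  push_cast
  field_simp

lemma sum_extend {d K : ℕ} (h : K ≤ d) (f : Fin K → ℝ) :
    ∑ j : Fin d, (if hj : (j:ℕ) < K then f ⟨j, hj⟩ else 0) = ∑ k : Fin K, f k := by
  have hF : ∀ j : Fin d, (if hj : (j:ℕ) < K then f ⟨j, hj⟩ else 0)
      = (fun i : ℕ => if hi : i < K then f ⟨i, hi⟩ else 0) (j:ℕ) := fun j => rfl
  rw [Finset.sum_congr rfl fun j _ => hF j,
    Fin.sum_univ_eq_sum_range (fun i : ℕ => if hi : i < K then f ⟨i, hi⟩ else 0) d,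
    ← Finset.sum_subset (Finset.range_subset_range.2 h)
      (fun x _ hx => dif_neg (by simpa using hx)),
    ← Fin.sum_univ_eq_sum_range (fun i : ℕ => if hi : i < K then f ⟨i, hi⟩ else 0) K]
  exact Finset.sum_congr rfl fun i _ => by simp [i.isLt]

lemma ipM_H_HBtB (hK : (K:ℝ) ≠ 0) {d : ℕ} (H : Matrix (Fin d) (Fin K × Fin n) ℝ) :
    ipM H (H * ((Bm K n)ᵀ * Bm K n)) = frobSq (H * (Bm K n)ᵀ) := by
  rw [← Matrix.mul_assoc]
  have h := ipM_mul_transpose H (H * (Bm K n)ᵀ) (Bm K n)ᵀ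
  rw [Matrix.transpose_transpose] at h
  rw [h, ipM_self]

lemma frobSq_HBtB (hK : (K:ℝ) ≠ 0) {d : ℕ} (H : Matrix (Fin d) (Fin K × Fin n) ℝ) :
    frobSq (H * ((Bm K n)ᵀ * Bm K n)) = (n:ℝ) * frobSq (H * (Bm K n)ᵀ) := by
  set C := (Bm K n)ᵀ * Bm K n with hC
  have hCt : Cᵀ = C := by rw [hC, Matrix.transpose_mul, Matrix.transpose_transpose]
  have h1 := ipM_mul_transpose (H * C) H Cᵀ
  rw [Matrix.transpose_transpose, hCt] at h1
  rw [← ipM_self, h1, Matrix.mul_assoc, BtB_sq hK, Matrix.mul_smul, ipM_smul_right,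
    ipM_H_HBtB hK]

/-- The sum-of-squares identity for the regularization slack. -/
lemma sos_identity (hK : (K:ℝ) ≠ 0) (hn : (n:ℝ) ≠ 0) {d : ℕ} (lW lH : ℝ)
    (hlW : 0 ≤ lW) (hlH : 0 ≤ lH)
    (W : Matrix (Fin K) (Fin d) ℝ) (H : Matrix (Fin d) (Fin K × Fin n) ℝ) :
    lW/2 * frobSq W + lH/2 * frobSq H
        - (Real.sqrt lW * Real.sqrt lH / Real.sqrt n) * ipM (Bm K n) (W * H)
      = 1/2 * frobSq (Real.sqrt lW • Wᵀ - (Real.sqrt lH / Real.sqrt n) • (H * (Bm K n)ᵀ))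
        + lH/(2*(n:ℝ)^2) * frobSq ((n:ℝ) • H - H * ((Bm K n)ᵀ * Bm K n)) := by
  rw [frobSq_sub, frobSq_sub, frobSq_smul, frobSq_smul, frobSq_smul, frobSq_transpose,
    ipM_smul_left, ipM_smul_right, ipM_smul_left, ipM_H_HBtB hK, frobSq_HBtB hK,
    ipM_B_WH]
  rw [div_pow, Real.sq_sqrt hlW, Real.sq_sqrt hlH, Real.sq_sqrt (Nat.cast_nonneg n)]
  field_simp
  ring

lemma sum_extend' {d K : ℕ} (h : K ≤ d) (f : Fin K → ℝ) (F : Fin d → ℝ)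
    (hF : ∀ j : Fin d, F j = if hj : (j:ℕ) < K then f ⟨j, hj⟩ else 0) :
    ∑ j : Fin d, F j = ∑ k : Fin K, f k := by
  rw [Finset.sum_congr rfl fun j _ => hF j]
  exact sum_extend h f

lemma sum_row_mul {a b g : Type*} [Fintype a] [Fintype b] [Fintype g]
    (A : Matrix a b ℝ) (C : Matrix b g ℝ) (i : a) :
    ∑ j, (A * C) i j = ∑ k, A i k * (∑ j, C k j) := by
  simp only [Matrix.mul_apply]
  rw [Finset.sum_comm]
  exact Finset.sum_congr rfl fun k _ => by rw [← Finset.mul_sum]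

end UFMaux

open UFMaux in
set_option maxHeartbeats 2000000 in
/-- Consequence of Theorem 2 (UFM with regularized MSE loss, unregularized bias):
for `c := K√(nλ_H λ_W) ≤ 1` and `ρ := ((1−c)(K−1)/K)√(λ_W/(nλ_H))`, any global minimizer
`(W*, H*, b*)` satisfies `W*W*ᵀ = (nλ_H/λ_W)·ρ·(K/(K−1))·(I_K − (1/K)1_K1_Kᵀ)` and
`W*H* = √(nλ_H/λ_W)·ρ·(K/(K−1))·((I_K − (1/K)1_K1_Kᵀ) ⊗ 1_nᵀ)`. -/
theorem ufm_mse_unregBias_WWt_WH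
    (K d n : ℕ) (hK : 2 ≤ K) (hd : K ≤ d) (hn : 1 ≤ n)
    (lW lH : ℝ) (hlW : 0 < lW) (hlH : 0 < lH)
    (c : ℝ) (hc : c = (K : ℝ) * Real.sqrt ((n : ℝ) * lH * lW)) (hc1 : c ≤ 1)
    (ρ : ℝ) (hρ : ρ = (1 - c) * ((K : ℝ) - 1) / (K : ℝ) * Real.sqrt (lW / ((n : ℝ) * lH)))
    (Y : Matrix (Fin K) (Fin K × Fin n) ℝ)
    (hY : ∀ k p, Y k p = if p.1 = k then 1 else 0)
    (g : Matrix (Fin K) (Fin d) ℝ → Matrix (Fin d) (Fin K × Fin n) ℝ → (Fin K → ℝ) → ℝ)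
    (hg : ∀ W H b, g W H b =
      1 / (2 * (K : ℝ) * (n : ℝ)) *
          frobSq (W * H + Matrix.of (fun k (_ : Fin K × Fin n) => b k) - Y)
        + lW / 2 * frobSq W + lH / 2 * frobSq H)
    (Ws : Matrix (Fin K) (Fin d) ℝ) (Hs : Matrix (Fin d) (Fin K × Fin n) ℝ)
    (bs : Fin K → ℝ)
    (hmin : ∀ W H b, g Ws Hs bs ≤ g W H b) :
    Ws * Wsᵀ = ((n : ℝ) * lH / lW * ρ * ((K : ℝ) / ((K : ℝ) - 1))) •
        ((1 : Matrix (Fin K) (Fin K) ℝ)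
          - (1 / (K : ℝ)) • Matrix.of (fun _ _ : Fin K => (1 : ℝ))) ∧
    Ws * Hs = (Real.sqrt ((n : ℝ) * lH / lW) * ρ * ((K : ℝ) / ((K : ℝ) - 1))) •
        Matrix.of (fun (k : Fin K) (p : Fin K × Fin n) =>
          (if k = p.1 then (1 : ℝ) else 0) - 1 / (K : ℝ)) := by
  classical
  -- scalar setup
  have hKpos : (0:ℝ) < K := by
    have : (2:ℝ) ≤ K := by exact_mod_cast hK
    linarith
  have hK0 : (K:ℝ) ≠ 0 := ne_of_gt hKpos
  have hKm1 : (K:ℝ) - 1 ≠ 0 := by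
    have : (2:ℝ) ≤ K := by exact_mod_cast hK
    intro h; linarith
  have hnpos : (0:ℝ) < n := by
    have : (1:ℝ) ≤ n := by exact_mod_cast hn
    linarith
  have hn0 : (n:ℝ) ≠ 0 := ne_of_gt hnpos
  have hsn : (0:ℝ) < Real.sqrt n := Real.sqrt_pos.2 hnpos
  have hsW : (0:ℝ) < Real.sqrt lW := Real.sqrt_pos.2 hlW
  have hsH : (0:ℝ) < Real.sqrt lH := Real.sqrt_pos.2 hlH
  set sn := Real.sqrt n with hsndef
  set sW := Real.sqrt lW with hsWdef
  set sH := Real.sqrt lH with hsHdef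
  have hsn2 : sn^2 = (n:ℝ) := Real.sq_sqrt hnpos.le
  have hsW2 : sW^2 = lW := Real.sq_sqrt hlW.le
  have hsH2 : sH^2 = lH := Real.sq_sqrt hlH.le
  have hsqrt1 : Real.sqrt ((n:ℝ) * lH * lW) = sn * sH * sW := by
    rw [Real.sqrt_mul (by positivity), Real.sqrt_mul hnpos.le]
  have hcval : c = (K:ℝ) * (sn * sH * sW) := by rw [hc, hsqrt1]
  have hcpos : 0 < c := by rw [hcval]; positivity
  have hsqrt2 : Real.sqrt ((n:ℝ) * lH / lW) = sn * sH / sW := by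
    rw [Real.sqrt_div (by positivity), Real.sqrt_mul hnpos.le]
  have hsqrt3 : Real.sqrt (lW / ((n:ℝ) * lH)) = sW / (sn * sH) := by
    rw [Real.sqrt_div hlW.le, Real.sqrt_mul hnpos.le]
  have h1c : 0 ≤ 1 - c := by linarith
  -- the decomposition of g
  have hdecomp : ∀ W H b, g W H b
      = 1 / (2 * (K:ℝ) * (n:ℝ)) *
          frobSq (W * H + Matrix.of (fun k (_ : Fin K × Fin n) => b k) - Y + c • Bm K n)
        + (1/2 * frobSq (sW • Wᵀ - (sH/sn) • (H * (Bm K n)ᵀ))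
            + lH/(2*(n:ℝ)^2) * frobSq ((n:ℝ) • H - H * ((Bm K n)ᵀ * Bm K n)))
        + (c * ((K:ℝ)-1)/K - c^2 * ((K:ℝ)-1)/(2*K)) := by
    intro W H b
    rw [hg]
    have h1 : frobSq (W * H + Matrix.of (fun k (_ : Fin K × Fin n) => b k) - Y + c • Bm K n)
        = frobSq (W * H + Matrix.of (fun k (_ : Fin K × Fin n) => b k) - Y)
          + 2 * (c * ipM (W * H + Matrix.of (fun k (_ : Fin K × Fin n) => b k) - Y) (Bm K n))
          + c^2 * frobSq (Bm K n) := by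
      rw [frobSq_add, ipM_smul_right, frobSq_smul]
    have h2 : ipM (W * H + Matrix.of (fun k (_ : Fin K × Fin n) => b k) - Y) (Bm K n)
        = ipM (Bm K n) (W * H) - (n:ℝ) * ((K:ℝ) - 1) := by
      rw [ipM_sub_left, ipM_add_left, ipM_const_Bm hK0, ipM_Y_Bm hK0 Y hY, add_zero, ipM_comm]
    have h3 : frobSq (Bm K n) = (n:ℝ) * ((K:ℝ) - 1) := frobSq_Bm hK0
    have h4 := sos_identity hK0 hn0 lW lH hlW.le hlH.le W H
    rw [← hsWdef, ← hsHdef, ← hsndef] at h4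
    have h5 : sW * sH / sn = c / ((K:ℝ) * (n:ℝ)) := by
      rw [hcval, ← hsn2]
      field_simp
    rw [h5] at h4
    rw [h1, h2, h3, ← h4]
    field_simp
    ring
  -- the comparison point
  set a := Real.sqrt ((n:ℝ) * lH / lW) with hadef
  have ha : a = sn * sH / sW := hsqrt2
  have hapos : 0 < a := by rw [ha]; positivity
  set β := Real.sqrt (a * (1 - c)) with hβdef
  set γ := Real.sqrt ((1 - c) / a) with hγdef
  have hβ2 : β^2 = a * (1 - c) := Real.sq_sqrt (by positivity)
  have hγ2 : γ^2 = (1 - c) / a := Real.sq_sqrt (by positivity)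
  have hβγ : β * γ = 1 - c := by
    rw [hβdef, hγdef, ← Real.sqrt_mul (by positivity)]
    rw [show a * (1 - c) * ((1 - c) / a) = (1 - c)^2 by field_simp]
    exact Real.sqrt_sq h1c
  set W0 : Matrix (Fin K) (Fin d) ℝ :=
    Matrix.of (fun k j => if hj : (j:ℕ) < K then β * bc K k ⟨j, hj⟩ else 0) with hW0def
  set H0 : Matrix (Fin d) (Fin K × Fin n) ℝ :=
    Matrix.of (fun j p => if hj : (j:ℕ) < K then γ * Bm K n ⟨j, hj⟩ p else 0) with hH0def
  have hW0H0 : W0 * H0 = (β * γ) • Bm K n := by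
    ext k p
    rw [Matrix.mul_apply, Matrix.smul_apply]
    have he : ∀ j : Fin d, W0 k j * H0 j p
        = (if hj : (j:ℕ) < K then (β * bc K k ⟨j, hj⟩) * (γ * Bm K n ⟨j, hj⟩ p) else 0) := by
      intro j
      by_cases hj : (j:ℕ) < K <;> simp [hW0def, hH0def, hj]
    rw [sum_extend' hd (fun k' : Fin K => (β * bc K k k') * (γ * Bm K n k' p))
      (fun j => W0 k j * H0 j p) he]
    have he2 : ∀ k' : Fin K, (β * bc K k k') * (γ * Bm K n k' p)
        = (β * γ) * (bc K k k' * bc K p.1 k') := by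
      intro k'
      have : Bm K n k' p = bc K p.1 k' := by simp [Bm, bc, eq_comm]
      rw [this]; ring
    rw [Finset.sum_congr rfl fun k' _ => he2 k', ← Finset.mul_sum, sum_bc_mul hK0]
    have : Bm K n k p = (if k = p.1 then (1:ℝ) else 0) - 1/K := by
      simp [Bm, bc, eq_comm]
    rw [this, smul_eq_mul]
  have hfW0 : frobSq W0 = β^2 * ((K:ℝ) - 1) := by
    rw [frobSq]
    have he : ∀ (k : Fin K) (j : Fin d), (W0 k j)^2
        = (if hj : (j:ℕ) < K then β^2 * (bc K k ⟨j, hj⟩ * bc K k ⟨j, hj⟩) else 0) := by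
      intro k j
      by_cases hj : (j:ℕ) < K <;> simp [hW0def, hj] <;> ring
    have hk : ∀ k : Fin K, ∑ j : Fin d, (W0 k j)^2 = β^2 * (1 - 1/(K:ℝ)) := by
      intro k
      rw [sum_extend' hd (fun k' : Fin K => β^2 * (bc K k k' * bc K k k'))
        (fun j => (W0 k j)^2) (he k), ← Finset.mul_sum, sum_bc_mul hK0, if_pos rfl]
    rw [Finset.sum_congr rfl fun k _ => hk k, Finset.sum_const, Finset.card_univ,
      Fintype.card_fin, nsmul_eq_mul]
    field_simp
  have hBmrowSq : ∀ k : Fin K, ∑ p : Fin K × Fin n, (Bm K n k p)^2 = (n:ℝ) * (1 - 1/(K:ℝ)) := by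
    intro k
    have h : ∑ p, (Bm K n k p)^2 = (Bm K n * (Bm K n)ᵀ) k k := by
      rw [Matrix.mul_apply]
      exact Finset.sum_congr rfl fun p _ => by rw [sq, Matrix.transpose_apply]
    rw [h, BmBmT hK0]
    simp [Matrix.smul_apply, Matrix.one_apply_eq]
  have hfH0 : frobSq H0 = γ^2 * ((n:ℝ) * ((K:ℝ) - 1)) := by
    rw [frobSq]
    have hj' : ∀ j : Fin d, ∑ p : Fin K × Fin n, (H0 j p)^2
        = (if hj : (j:ℕ) < K then γ^2 * ((n:ℝ) * (1 - 1/(K:ℝ))) else 0) := by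
      intro j
      by_cases hj : (j:ℕ) < K
      · rw [dif_pos hj]
        have : ∀ p : Fin K × Fin n, (H0 j p)^2 = γ^2 * (Bm K n ⟨(j:ℕ), hj⟩ p)^2 := by
          intro p; simp [hH0def, hj]; ring
        rw [Finset.sum_congr rfl fun p _ => this p, ← Finset.mul_sum, hBmrowSq]
      · rw [dif_neg hj]
        have : ∀ p : Fin K × Fin n, (H0 j p)^2 = 0 := by
          intro p; simp [hH0def, hj]
        rw [Finset.sum_congr rfl fun p _ => this p, Finset.sum_const_zero]
    rw [sum_extend' hd (fun _ : Fin K => γ^2 * ((n:ℝ) * (1 - 1/(K:ℝ))))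
      (fun j => ∑ p : Fin K × Fin n, (H0 j p)^2) hj', Finset.sum_const,
      Finset.card_univ, Fintype.card_fin, nsmul_eq_mul]
    field_simp
  set b0 : Fin K → ℝ := fun _ => 1/(K:ℝ) with hb0def
  have hres : W0 * H0 + Matrix.of (fun k (_ : Fin K × Fin n) => b0 k) - Y
      = (β * γ - 1) • Bm K n := by
    ext k p
    rw [Matrix.sub_apply, Matrix.add_apply, Matrix.smul_apply, hW0H0, Matrix.smul_apply]
    simp only [Matrix.of_apply, hb0def, hY, smul_eq_mul]
    have : Bm K n k p = (if p.1 = k then (1:ℝ) else 0) - 1/K := rfl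
    rw [this]
    ring
  have hgval : g W0 H0 b0 = c * ((K:ℝ)-1)/K - c^2 * ((K:ℝ)-1)/(2*K) := by
    rw [hg, hres, frobSq_smul, frobSq_Bm hK0, hfW0, hfH0, hβγ, hβ2, hγ2, ha, hcval,
      ← hsW2, ← hsH2, ← hsn2]
    field_simp
    ring
  -- extraction of equalities from optimality
  have hle := hmin W0 H0 b0
  rw [hgval, hdecomp Ws Hs bs] at hle
  have hp1 : (0:ℝ) < 1 / (2 * (K:ℝ) * (n:ℝ)) := by positivity
  have hp3 : (0:ℝ) < lH / (2*(n:ℝ)^2) := by positivity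
  have hf1 := frobSq_nonneg (Ws * Hs + Matrix.of (fun k (_ : Fin K × Fin n) => bs k) - Y
      + c • Bm K n)
  have hf2 := frobSq_nonneg (sW • Wsᵀ - (sH/sn) • (Hs * (Bm K n)ᵀ))
  have hf3 := frobSq_nonneg ((n:ℝ) • Hs - Hs * ((Bm K n)ᵀ * Bm K n))
  have hm1 := mul_nonneg hp1.le hf1
  have hm2 : (0:ℝ) ≤ 1/2 * frobSq (sW • Wsᵀ - (sH/sn) • (Hs * (Bm K n)ᵀ)) := by linarith
  have hm3 := mul_nonneg hp3.le hf3
  have hz1 : frobSq (Ws * Hs + Matrix.of (fun k (_ : Fin K × Fin n) => bs k) - Y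
      + c • Bm K n) = 0 := by
    have h0 : 1 / (2 * (K:ℝ) * (n:ℝ)) * frobSq (Ws * Hs
        + Matrix.of (fun k (_ : Fin K × Fin n) => bs k) - Y + c • Bm K n) = 0 :=
      le_antisymm (by linarith) hm1
    exact (mul_eq_zero.mp h0).resolve_left (ne_of_gt hp1)
  have hz2 : frobSq (sW • Wsᵀ - (sH/sn) • (Hs * (Bm K n)ᵀ)) = 0 := by
    have h0 : 1/2 * frobSq (sW • Wsᵀ - (sH/sn) • (Hs * (Bm K n)ᵀ)) = 0 :=
      le_antisymm (by linarith) hm2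
    exact (mul_eq_zero.mp h0).resolve_left (by norm_num)
  have hz3 : frobSq ((n:ℝ) • Hs - Hs * ((Bm K n)ᵀ * Bm K n)) = 0 := by
    have h0 : lH/(2*(n:ℝ)^2) * frobSq ((n:ℝ) • Hs - Hs * ((Bm K n)ᵀ * Bm K n)) = 0 :=
      le_antisymm (by linarith) hm3
    exact (mul_eq_zero.mp h0).resolve_left (ne_of_gt hp3)
  have hR0 : Ws * Hs + Matrix.of (fun k (_ : Fin K × Fin n) => bs k) - Y + c • Bm K n = 0 :=
    frobSq_eq_zero hz1
  have hE1 : sW • Wsᵀ = (sH/sn) • (Hs * (Bm K n)ᵀ) := sub_eq_zero.mp (frobSq_eq_zero hz2)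
  have hE2 : Hs * ((Bm K n)ᵀ * Bm K n) = (n:ℝ) • Hs :=
    (sub_eq_zero.mp (frobSq_eq_zero hz3)).symm
  -- row sums of Hs vanish
  have hBtBrow : ∀ q : Fin K × Fin n, ∑ p : Fin K × Fin n, ((Bm K n)ᵀ * Bm K n) q p = 0 := by
    intro q
    rw [sum_row_mul]
    have : ∀ k : Fin K, (Bm K n)ᵀ q k * (∑ p, Bm K n k p) = 0 := by
      intro k; rw [Bm_row_sum hK0, mul_zero]
    rw [Finset.sum_congr rfl fun k _ => this k, Finset.sum_const_zero]
  have hHrow : ∀ j : Fin d, ∑ p : Fin K × Fin n, Hs j p = 0 := by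
    intro j
    have h := congrArg (fun M => ∑ p : Fin K × Fin n, M j p) hE2
    rw [sum_row_mul,
      Finset.sum_congr rfl (fun q _ => by rw [hBtBrow q, mul_zero]),
      Finset.sum_const_zero] at h
    have h2 : ∑ p : Fin K × Fin n, ((n:ℝ) • Hs) j p = (n:ℝ) * ∑ p : Fin K × Fin n, Hs j p := by
      simp only [Matrix.smul_apply, smul_eq_mul]
      rw [← Finset.mul_sum]
    rw [h2] at h
    exact (mul_eq_zero.mp h.symm).resolve_left hn0
  have hWHrow : ∀ k : Fin K, ∑ p : Fin K × Fin n, (Ws * Hs) k p = 0 := by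
    intro k
    rw [sum_row_mul]
    rw [Finset.sum_congr rfl (fun j _ => by rw [hHrow j, mul_zero]), Finset.sum_const_zero]
  -- the bias is 1/K
  have hbs : ∀ k, bs k = 1/(K:ℝ) := by
    intro k
    have h := congrArg (fun M => ∑ p : Fin K × Fin n, M k p) hR0
    simp only [Matrix.add_apply, Matrix.sub_apply, Matrix.smul_apply, Matrix.of_apply,
      Matrix.zero_apply, smul_eq_mul] at h
    simp only [Finset.sum_add_distrib, Finset.sum_sub_distrib] at h
    rw [hWHrow k, Y_row_sum hK0 Y hY k, ← Finset.mul_sum, Bm_row_sum hK0, mul_zero] at h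
    simp only [Finset.sum_const, Finset.card_univ, Fintype.card_prod, Fintype.card_fin,
      nsmul_eq_mul, Nat.cast_mul] at h
    have h3 : (n:ℝ) * (bs k * (K:ℝ)) = (n:ℝ) * 1 := by linear_combination h
    have h4 := mul_left_cancel₀ hn0 h3
    field_simp
    linarith
  -- W*H = (1-c) B
  have hWH : Ws * Hs = (1 - c) • Bm K n := by
    ext k p
    have h := congrArg (fun M => M k p) hR0
    simp only [Matrix.add_apply, Matrix.sub_apply, Matrix.smul_apply, Matrix.of_apply,
      Matrix.zero_apply, smul_eq_mul] at h
    rw [hbs k, hY] at h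
    have hBval : Bm K n k p = (if p.1 = k then (1:ℝ) else 0) - 1/K := rfl
    rw [Matrix.smul_apply, smul_eq_mul, hBval]
    rw [hBval] at h
    linear_combination h
  constructor
  · -- W Wᵀ
    have h := congrArg (fun M => Ws * M) hE1
    simp only [Matrix.mul_smul] at h
    rw [← Matrix.mul_assoc, hWH, Matrix.smul_mul, BmBmT hK0] at h
    simp only [smul_smul] at h
    have h2 := congrArg (fun M => (sW⁻¹ : ℝ) • M) h
    simp only [smul_smul] at h2
    rw [inv_mul_cancel₀ (ne_of_gt hsW), one_smul] at h2
    have hco : (n:ℝ) * lH / lW * ρ * ((K:ℝ)/((K:ℝ)-1))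
        = sW⁻¹ * (sH/sn * ((1-c) * (n:ℝ))) := by
      rw [hρ, hsqrt3, ← hsW2, ← hsH2, ← hsn2]
      field_simp
    rw [hco]
    exact h2
  · have hcoeff2 : a * ρ * ((K:ℝ)/((K:ℝ)-1)) = 1 - c := by
      rw [ha, hρ, hsqrt3]
      field_simp
    have hof : Matrix.of (fun (k : Fin K) (p : Fin K × Fin n) =>
        (if k = p.1 then (1:ℝ) else 0) - 1/(K:ℝ)) = Bm K n := by
      ext k p
      simp only [Matrix.of_apply, Bm, bc]
      by_cases h : k = p.1
      · rw [if_pos h, if_pos h.symm]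
      · rw [if_neg h, if_neg (Ne.symm h)]
    rw [hcoeff2, hof]
    exact hWH

end
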